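/- Let G be a graph of order n ≥ 2 with maximum degree Δ, minimum degree δ, and α ∈ [0,1]. Then λ₁(A_α(G)) ≥ (α(Δ + δ) + √(α²(Δ − δ)² + 4(1−α)²Δ))/2. -/

import Mathlib

open Matrix SimpleGraph Finset
open scoped RealInnerProductSpace
set_option maxHeartbeats 1000000

noncomputable def Aalpha {V : Type*} [Fintype V] (α : ℝ) (G : SimpleGraph V) : Matrix V V ℝ :=
  letI := Classical.decEq V
  letI : DecidableRel G.Adj := Classical.decRel _
  α • Matrix.diagonal (fun v => (G.degree v : ℝ)) + (1 - α) • G.adjMatrix ℝ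

noncomputable instance edgeSetFintype {V : Type*} [Fintype V] (G : SimpleGraph V) :
    Fintype G.edgeSet :=
  Set.Finite.fintype (Set.toFinite _)

open scoped Classical in
noncomputable def incB {V : Type*} [Fintype V] (G : SimpleGraph V) : Matrix V G.edgeSet ℝ :=
  fun v e => if v ∈ (e : Sym2 V) then 1 else 0

noncomputable def edgeDegSum {V : Type*} [Fintype V] (G : SimpleGraph V) (e : Sym2 V) : ℝ :=
  letI := Classical.decEq V
  letI : DecidableRel G.Adj := Classical.decRel _
  Sym2.lift ⟨fun a b => (G.degree a : ℝ) + (G.degree b : ℝ), fun a b => by ring⟩ e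

lemma Aalpha_apply {V : Type*} [Fintype V] [DecidableEq V] (α : ℝ) (G : SimpleGraph V)
    [DecidableRel G.Adj] (v w : V) :
    Aalpha α G v w = α * (if v = w then (G.degree v : ℝ) else 0)
      + (1 - α) * (if G.Adj v w then 1 else 0) := by
  unfold Aalpha
  simp only [Matrix.add_apply, Matrix.smul_apply, Matrix.diagonal_apply,
    SimpleGraph.adjMatrix_apply, smul_eq_mul]
  congr!

lemma rayleigh {V : Type*} [Fintype V] [DecidableEq V] [Nonempty V]
    (A : Matrix V V ℝ) (hA : A.IsHermitian) (x : EuclideanSpace ℝ V) :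
    x ⬝ᵥ (A *ᵥ x) ≤ (⨆ i, hA.eigenvalues i) * (x ⬝ᵥ x) := by
  have hsym := (Matrix.isHermitian_iff_isSymmetric).1 hA
  set b := hA.eigenvectorBasis with hb
  have hdot : ∀ y z : EuclideanSpace ℝ V, (y : V → ℝ) ⬝ᵥ (z : V → ℝ) = ⟪y, z⟫ := by
    intro y z
    rw [EuclideanSpace.inner_eq_star_dotProduct]
    simp [dotProduct, mul_comm]
  have hAx : (A *ᵥ x : V → ℝ) = ((Matrix.toEuclideanLin A x : EuclideanSpace ℝ V) : V → ℝ) := rfl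
  have hmul : ∀ i, ⟪b i, Matrix.toEuclideanLin A x⟫ = hA.eigenvalues i * ⟪b i, x⟫ := by
    intro i
    rw [← hsym (b i) x]
    have h2 : Matrix.toEuclideanLin A (b i) = hA.eigenvalues i • b i := by
      apply (WithLp.equiv 2 (V → ℝ)).injective
      simpa using hA.mulVec_eigenvectorBasis i
    rw [h2, inner_smul_left]
    simp
  have key : x ⬝ᵥ (A *ᵥ x) = ∑ i, hA.eigenvalues i * (⟪b i, x⟫)^2 := by
    rw [hAx, hdot, ← b.sum_inner_mul_inner x (Matrix.toEuclideanLin A x)]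
    refine Finset.sum_congr rfl fun i _ => ?_
    rw [hmul i, real_inner_comm x (b i)]
    ring
  have key2 : x ⬝ᵥ x = ∑ i, (⟪b i, x⟫)^2 := by
    rw [hdot, ← b.sum_inner_mul_inner x x]
    refine Finset.sum_congr rfl fun i _ => ?_
    rw [real_inner_comm x (b i)]
    ring
  rw [key, key2, Finset.mul_sum]
  refine Finset.sum_le_sum fun i _ => ?_
  have h1 : hA.eigenvalues i ≤ ⨆ j, hA.eigenvalues j :=
    le_ciSup (Set.Finite.bddAbove (Set.finite_range _)) i
  nlinarith [sq_nonneg (⟪b i, x⟫)]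

theorem stmt3 {V : Type*} [Fintype V] [DecidableEq V] [Nonempty V]
    (G : SimpleGraph V) [DecidableRel G.Adj] (hn : 2 ≤ Fintype.card V)
    (α : ℝ) (hα : α ∈ Set.Icc (0:ℝ) 1) (hM : (Aalpha α G).IsHermitian) :
    (α * ((G.maxDegree : ℝ) + (G.minDegree : ℝ)) +
        Real.sqrt (α ^ 2 * ((G.maxDegree : ℝ) - (G.minDegree : ℝ)) ^ 2 +
          4 * (1 - α) ^ 2 * (G.maxDegree : ℝ))) / 2 ≤ ⨆ i, hM.eigenvalues i := by
  obtain ⟨hα0, hα1⟩ := hα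
  obtain ⟨u, hu⟩ := G.exists_maximal_degree_vertex
  set D : ℝ := (G.maxDegree : ℝ) with hDdef
  set d : ℝ := (G.minDegree : ℝ) with hddef
  have hD0 : (0:ℝ) ≤ D := by positivity
  have hd0 : (0:ℝ) ≤ d := by positivity
  have hdD : d ≤ D := by
    rw [hddef, hDdef]
    have h1 := G.minDegree_le_degree u
    have h2 := G.degree_le_maxDegree u
    exact_mod_cast h1.trans h2
  set a : ℝ := α * D with hadef
  set dd : ℝ := α * d with hdddef
  set b : ℝ := (1 - α) * Real.sqrt D with hbdef
  have hb0 : (0:ℝ) ≤ b := by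
    have := Real.sqrt_nonneg D
    nlinarith
  have hbsq : b ^ 2 = (1 - α) ^ 2 * D := by
    rw [hbdef, mul_pow, Real.sq_sqrt hD0]
  set R : ℝ := Real.sqrt (α ^ 2 * (D - d) ^ 2 + 4 * (1 - α) ^ 2 * D) with hRdef
  have hRsq : R ^ 2 = α ^ 2 * (D - d) ^ 2 + 4 * (1 - α) ^ 2 * D :=
    Real.sq_sqrt (by positivity)
  have hR0 : (0:ℝ) ≤ R := Real.sqrt_nonneg _
  set L : ℝ := (α * (D + d) + R) / 2 with hLdef
  show L ≤ ⨆ i, hM.eigenvalues i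
  have hquad : L ^ 2 - (a + dd) * L + a * dd - b ^ 2 = 0 := by
    rw [hLdef, hadef, hdddef]
    nlinarith [hRsq, hbsq]
  have haL : a ≤ L := by
    have h1 : a - dd ≤ R := by
      have h2 : Real.sqrt ((a - dd) ^ 2) ≤ R := by
        apply Real.sqrt_le_sqrt
        rw [hadef, hdddef]
        nlinarith
      rw [Real.sqrt_sq_eq_abs] at h2
      exact (le_abs_self _).trans h2
    rw [hLdef, hadef]
    rw [hadef, hdddef] at h1
    linarith
  -- degree facts
  have hdegu : (G.degree u : ℝ) = D := by rw [hDdef, hu]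
  have hdegle : ∀ v, d ≤ (G.degree v : ℝ) := by
    intro v
    rw [hddef]
    exact_mod_cast G.minDegree_le_degree v
  clear_value D d a dd b R L
  rcases eq_or_lt_of_le haL with hcase | hcase
  · -- L = a : use indicator of u
    set x : V → ℝ := fun v => if v = u then 1 else 0 with hx
    have h1 := rayleigh (Aalpha α G) hM (WithLp.toLp 2 x)
    simp only [WithLp.ofLp_toLp] at h1
    have e1 : x ⬝ᵥ (Aalpha α G *ᵥ x) = α * D := by
      simp only [dotProduct, mulVec, hx, mul_ite, ite_mul, mul_one, mul_zero, one_mul, zero_mul,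
        Finset.sum_ite_eq', Finset.mem_univ, if_true]
      rw [Aalpha_apply]
      simp [hdegu]
    have e2 : x ⬝ᵥ x = 1 := by
      simp [hx, dotProduct, ite_mul, Finset.sum_ite_eq']
    rw [e1, e2, mul_one] at h1
    calc L = a := hcase.symm
    _ ≤ _ := by rw [hadef]; exact h1
  · -- L > a
    set y : ℝ := L - a with hy
    have hy0 : 0 < y := by rw [hy]; linarith
    have hLdd : dd < L := by
      have hda : dd ≤ a := by
        rw [hadef, hdddef]
        exact mul_le_mul_of_nonneg_left hdD hα0
      linarith
    have hb2pos : 0 < b ^ 2 := by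
      nlinarith [hquad, mul_pos (sub_pos.mpr hcase) (sub_pos.mpr hLdd)]
    have hbpos : 0 < b := by
      rcases hb0.lt_or_eq with h | h
      · exact h
      · exfalso; rw [← h] at hb2pos; simp at hb2pos
    have hsqD : 0 < Real.sqrt D := by
      rcases (Real.sqrt_nonneg D).lt_or_eq with h | h
      · exact h
      · exfalso; rw [hbdef, ← h] at hbpos; simp at hbpos
    have hDpos : 0 < D := Real.sqrt_pos.mp hsqD
    have hDS : Real.sqrt D * Real.sqrt D = D := Real.mul_self_sqrt hD0
    set s : ℝ := y / Real.sqrt D with hs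
    have hs0 : 0 < s := by positivity
    have hsD : s * Real.sqrt D = y := by
      rw [hs]; field_simp
    clear_value y s
    set N := G.neighborFinset u with hN
    have hNu : u ∉ N := by simp [hN]
    have hNcard : (N.card : ℝ) = D := by
      have : N.card = G.degree u := rfl
      rw [this, hdegu]
    set x : V → ℝ := fun v => if v = u then b else if G.Adj u v then s else 0 with hx
    have hxnn : ∀ v, 0 ≤ x v := by
      intro v; rw [hx]; dsimp only; split_ifs <;> [exact hb0; exact hs0.le; rfl]
    have hxu : x u = b := by simp [hx]
    have hxN : ∀ v ∈ N, x v = s := by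
      intro v hv
      rw [hN, SimpleGraph.mem_neighborFinset] at hv
      have hvne : v ≠ u := fun h => by rw [h] at hv; exact G.irrefl hv
      simp [hx, hvne, hv]
    have h1 := rayleigh (Aalpha α G) hM (WithLp.toLp 2 x)
    simp only [WithLp.ofLp_toLp] at h1
    -- mulVec formula
    have hmv : ∀ v, (Aalpha α G *ᵥ x) v
        = α * (G.degree v : ℝ) * x v + (1 - α) * ∑ w, (if G.Adj v w then x w else 0) := by
      intro v
      simp only [mulVec, dotProduct, Aalpha_apply, add_mul]
      rw [Finset.sum_add_distrib]
      congr 1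
      · simp [ite_mul, mul_ite, Finset.sum_ite_eq, mul_assoc]
      · rw [Finset.mul_sum]
        refine Finset.sum_congr rfl fun w _ => ?_
        split_ifs <;> ring
    -- dot products
    have e2 : x ⬝ᵥ x = b ^ 2 + y ^ 2 := by
      have hterm : ∀ v, x v * x v
          = (if v = u then b * b else 0) + (if v ∈ N then s * s else 0) := by
        intro v
        by_cases hvu : v = u
        · have : v ∉ N := by rw [hvu]; exact hNu
          simp [hx, hvu, this, hNu]
        · by_cases hadj : G.Adj u v
          · have hvN : v ∈ N := by rw [hN, SimpleGraph.mem_neighborFinset]; exact hadj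
            simp [hxN v hvN, hvu, hvN]
          · have hvN : v ∉ N := by rw [hN, SimpleGraph.mem_neighborFinset]; exact hadj
            simp [hx, hvu, hadj, hvN]
      rw [dotProduct]
      rw [Finset.sum_congr rfl fun v _ => hterm v, Finset.sum_add_distrib]
      rw [Finset.sum_ite_eq' Finset.univ u (fun _ => b * b)]
      simp only [Finset.mem_univ, if_true]
      rw [Finset.sum_ite_mem, Finset.univ_inter, Finset.sum_const, nsmul_eq_mul, hNcard]
      have hys : D * (s * s) = y ^ 2 := by
        rw [← hsD, mul_pow, Real.sq_sqrt hD0]; ring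
      rw [hys]; ring
    -- neighbor sums for u
    have hsumu : ∑ w, (if G.Adj u w then x w else 0) = D * s := by
      have : ∀ w, (if G.Adj u w then x w else 0) = (if w ∈ N then s else 0) := by
        intro w
        by_cases h : G.Adj u w
        · have hwN : w ∈ N := by rw [hN, SimpleGraph.mem_neighborFinset]; exact h
          simp [h, hwN, hxN w hwN]
        · have hwN : w ∉ N := by rw [hN, SimpleGraph.mem_neighborFinset]; exact h
          simp [h, hwN]
      rw [Finset.sum_congr rfl fun w _ => this w]
      rw [Finset.sum_ite_mem, Finset.univ_inter, Finset.sum_const, nsmul_eq_mul, hNcard]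
    -- lower bound the Rayleigh quotient
    have hys2 : D * (s * s) = y ^ 2 := by
      rw [← hsD, mul_pow, Real.sq_sqrt hD0]; ring
    have hDs : D * s = Real.sqrt D * y := by
      conv_lhs => rw [← hDS]
      rw [mul_assoc, mul_comm (Real.sqrt D) s, hsD]
    have hkey : (1 - α) * (D * s) = b * y := by
      rw [hDs, hbdef]; ring
    have elow : a * b ^ 2 + 2 * b ^ 2 * y + dd * y ^ 2 ≤ x ⬝ᵥ (Aalpha α G *ᵥ x) := by
      have hS : x ⬝ᵥ (Aalpha α G *ᵥ x) = ∑ v ∈ insert u N, x v * (Aalpha α G *ᵥ x) v := by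
        rw [dotProduct]
        refine (Finset.sum_subset (Finset.subset_univ _) ?_).symm
        intro v _ hv
        have hvu : v ≠ u := fun h => hv (by rw [h]; exact Finset.mem_insert_self u N)
        have hvN : v ∉ N := fun h => hv (Finset.mem_insert_of_mem h)
        have hadj : ¬ G.Adj u v := by
          rw [hN, SimpleGraph.mem_neighborFinset] at hvN; exact hvN
        have : x v = 0 := by simp [hx, hvu, hadj]
        rw [this, zero_mul]
      have hgu : x u * (Aalpha α G *ᵥ x) u = a * b ^ 2 + b ^ 2 * y := by
        rw [hxu, hmv u, hxu, hsumu, hdegu, hadef]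
        linear_combination b * hkey
      have hgN : ∀ v ∈ N, s * (α * d * s + (1 - α) * b) ≤ x v * (Aalpha α G *ᵥ x) v := by
        intro v hv
        rw [hxN v hv, hmv v, hxN v hv]
        have hadj : G.Adj v u := by
          have := hv
          rw [hN, SimpleGraph.mem_neighborFinset] at this
          exact this.symm
        have hTb : b ≤ ∑ w, (if G.Adj v w then x w else 0) := by
          have h := Finset.single_le_sum (f := fun w => if G.Adj v w then x w else 0)
            (fun w _ => by split_ifs; exacts [hxnn w, le_refl 0]) (Finset.mem_univ u)
          simpa [hadj, hxu] using h
        have hdeg := hdegle v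
        have hin : α * d * s + (1 - α) * b
            ≤ α * (G.degree v : ℝ) * s + (1 - α) * ∑ w, (if G.Adj v w then x w else 0) := by
          gcongr
        exact mul_le_mul_of_nonneg_left hin hs0.le
      have hsum : (N.card : ℝ) * (s * (α * d * s + (1 - α) * b))
          ≤ ∑ v ∈ N, x v * (Aalpha α G *ᵥ x) v := by
        have h := Finset.card_nsmul_le_sum N (fun v => x v * (Aalpha α G *ᵥ x) v)
          (s * (α * d * s + (1 - α) * b)) hgN
        simpa [nsmul_eq_mul] using h
      have h2 : D * (s * (α * d * s + (1 - α) * b))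
          ≤ ∑ v ∈ N, x v * (Aalpha α G *ᵥ x) v := by
        rw [← hNcard]; exact hsum
      have h3 : a * b ^ 2 + 2 * b ^ 2 * y + dd * y ^ 2
          = (a * b ^ 2 + b ^ 2 * y) + D * (s * (α * d * s + (1 - α) * b)) := by
        rw [hdddef]
        linear_combination -b * hkey - α * d * hys2
      rw [hS, Finset.sum_insert hNu, hgu, h3]
      exact add_le_add le_rfl h2
    have eQ : a * b ^ 2 + 2 * b ^ 2 * y + dd * y ^ 2 = L * (b ^ 2 + y ^ 2) := by
      rw [hy]
      linear_combination (a - L) * hquad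
    rw [e2] at h1
    have hpos : 0 < b ^ 2 + y ^ 2 := by positivity
    have : L * (b ^ 2 + y ^ 2) ≤ (⨆ i, hM.eigenvalues i) * (b ^ 2 + y ^ 2) := by
      rw [← eQ]
      exact elow.trans h1
    exact le_of_mul_le_mul_right this hpos
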